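/- Let n ≥ 1 be an integer, let λ₁, …, λ_n be reals with λ_i ≥ λ_min > 0 for all i, and let D = diag(λ₁, …, λ_n) acting on ℝⁿ. Let 0 < γ < μ and C₁, C₂, C₃ > 0. Then there exists σ* (depending only on λ_min, γ, μ, C₁, C₂, C₃) such that for all σ₀ ≥ σ*, σ₁ ≥ σ₀, and every differentiable curve w : [σ₀, σ₁] → ℝⁿ satisfying w'(s) = D·w(s) + r(s) with |r(s)| ≤ C₁·|w(s)|² + C₂·e^{-γ s}·|w(s)| + C₃·e^{-μ s} for all s, the following outgoing property holds: at every s ∈ [σ₀, σ₁] with (1/2)·e^{-γ s} < |w(s)| ≤ e^{-γ s}, one has (d/ds)|w(s)|² > λ_min·|w(s)|². -/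

import Mathlib

open scoped RealInnerProductSpace

set_option maxHeartbeats 1000000

/-- Let `n ≥ 1`, let `λ₁, …, λ_n` be reals with `λ_i ≥ λ_min > 0`, and
let `D = diag(λ₁, …, λ_n)` act on `ℝⁿ` (with the Euclidean norm). Let `0 < γ < μ` and
`C₁, C₂, C₃ > 0`. Then there exists `σ*` (depending only on `λ_min, γ, μ, C₁, C₂, C₃`)
such that for all `σ₀ ≥ σ*`, `σ₁ ≥ σ₀`, and every differentiable curve
`w : [σ₀,σ₁] → ℝⁿ` with `w' = D w + r` and
`|r(s)| ≤ C₁|w(s)|² + C₂ e^{-γs}|w(s)| + C₃ e^{-μs}`, the outgoing property holds: at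
every `s ∈ [σ₀,σ₁]` with `(1/2)e^{-γs} < |w(s)| ≤ e^{-γs}`, one has
`(d/ds)|w(s)|² > λ_min |w(s)|²`. -/
theorem outgoing_property (n : ℕ) (hn : 1 ≤ n) (lam : Fin n → ℝ) (lammin : ℝ)
    (hlammin : 0 < lammin) (hlam : ∀ i, lammin ≤ lam i)
    (γ μ C₁ C₂ C₃ : ℝ) (hγ : 0 < γ) (hγμ : γ < μ)
    (hC₁ : 0 < C₁) (hC₂ : 0 < C₂) (hC₃ : 0 < C₃) :
    ∃ σstar : ℝ, ∀ σ₀ σ₁ : ℝ, σstar ≤ σ₀ → σ₀ ≤ σ₁ →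
      ∀ w w' r : ℝ → EuclideanSpace ℝ (Fin n),
        (∀ s ∈ Set.Icc σ₀ σ₁, HasDerivAt w (w' s) s) →
        (∀ s ∈ Set.Icc σ₀ σ₁, ∀ i : Fin n, w' s i = lam i * w s i + r s i) →
        (∀ s ∈ Set.Icc σ₀ σ₁,
          ‖r s‖ ≤ C₁ * ‖w s‖ ^ 2 + C₂ * Real.exp (-γ * s) * ‖w s‖
            + C₃ * Real.exp (-μ * s)) →
        ∀ s ∈ Set.Icc σ₀ σ₁,
          (1 / 2 : ℝ) * Real.exp (-γ * s) < ‖w s‖ → ‖w s‖ ≤ Real.exp (-γ * s) →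
          lammin * ‖w s‖ ^ 2 < deriv (fun t => ‖w t‖ ^ 2) s := by
  refine ⟨max ((1/γ) * Real.log (8*(C₁+C₂)/lammin)) ((1/(μ-γ)) * Real.log (16*C₃/lammin)),
    fun σ₀ σ₁ hσ₀ hσ₁ w w' r hw hw' hr s hs hlow hup => ?_⟩
  have hsstar : max ((1/γ) * Real.log (8*(C₁+C₂)/lammin)) ((1/(μ-γ)) * Real.log (16*C₃/lammin)) ≤ s :=
    le_trans (le_trans (le_refl _) hσ₀) hs.1
  have hμγ : 0 < μ - γ := by linarith
  -- bounds on exponentials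
  have hexp1 : Real.exp (-γ * s) ≤ lammin / (8*(C₁+C₂)) := by
    have h1 : (1/γ) * Real.log (8*(C₁+C₂)/lammin) ≤ s := le_trans (le_max_left _ _) hsstar
    have h2 : Real.log (8*(C₁+C₂)/lammin) ≤ γ * s := by
      rw [div_mul_eq_mul_div, div_le_iff₀ hγ] at h1; linarith [h1]
    have h3 : Real.exp (-γ * s) ≤ Real.exp (-Real.log (8*(C₁+C₂)/lammin)) := by
      apply Real.exp_le_exp.2; linarith
    calc Real.exp (-γ * s) ≤ Real.exp (-Real.log (8*(C₁+C₂)/lammin)) := h3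
      _ = lammin / (8*(C₁+C₂)) := by
          rw [Real.exp_neg, Real.exp_log (by positivity), inv_div]
  have hexp2 : Real.exp (-(μ-γ) * s) ≤ lammin / (16*C₃) := by
    have h1 : (1/(μ-γ)) * Real.log (16*C₃/lammin) ≤ s := le_trans (le_max_right _ _) hsstar
    have h2 : Real.log (16*C₃/lammin) ≤ (μ-γ) * s := by
      rw [div_mul_eq_mul_div, div_le_iff₀ hμγ] at h1; linarith [h1]
    have h3 : Real.exp (-(μ-γ) * s) ≤ Real.exp (-Real.log (16*C₃/lammin)) := by
      apply Real.exp_le_exp.2; linarith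
    calc Real.exp (-(μ-γ) * s) ≤ Real.exp (-Real.log (16*C₃/lammin)) := h3
      _ = lammin / (16*C₃) := by
          rw [Real.exp_neg, Real.exp_log (by positivity), inv_div]
  have hwpos : 0 < ‖w s‖ := lt_of_le_of_lt (by positivity) hlow
  -- bound on r
  have hrb : ‖r s‖ ≤ (3/8) * lammin * ‖w s‖ := by
    have h1 : C₁ * ‖w s‖ ^ 2 ≤ (lammin/8) * ‖w s‖ := by
      have : C₁ * ‖w s‖ ≤ lammin/8 := by
        calc C₁ * ‖w s‖ ≤ C₁ * Real.exp (-γ * s) := by nlinarith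
          _ ≤ C₁ * (lammin / (8*(C₁+C₂))) := by nlinarith
          _ ≤ lammin/8 := by
              rw [mul_div_assoc']
              rw [div_le_div_iff₀ (by positivity) (by norm_num)]
              nlinarith
      nlinarith [sq_nonneg (‖w s‖)]
    have h2 : C₂ * Real.exp (-γ * s) * ‖w s‖ ≤ (lammin/8) * ‖w s‖ := by
      have : C₂ * Real.exp (-γ * s) ≤ lammin/8 := by
        calc C₂ * Real.exp (-γ * s) ≤ C₂ * (lammin / (8*(C₁+C₂))) := by nlinarith
          _ ≤ lammin/8 := by
              rw [mul_div_assoc', div_le_div_iff₀ (by positivity) (by norm_num)]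
              nlinarith
      nlinarith
    have h3 : C₃ * Real.exp (-μ * s) ≤ (lammin/8) * ‖w s‖ := by
      have hsplit : Real.exp (-μ * s) = Real.exp (-(μ-γ) * s) * Real.exp (-γ * s) := by
        rw [← Real.exp_add]; ring_nf
      have h4 : C₃ * Real.exp (-μ * s) ≤ (lammin/16) * Real.exp (-γ * s) := by
        rw [hsplit]
        calc C₃ * (Real.exp (-(μ-γ) * s) * Real.exp (-γ * s))
            ≤ C₃ * (lammin / (16*C₃) * Real.exp (-γ * s)) := by
              apply mul_le_mul_of_nonneg_left _ hC₃.le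
              exact mul_le_mul_of_nonneg_right hexp2 (Real.exp_pos _).le
          _ = lammin/16 * Real.exp (-γ * s) := by field_simp
      have h5 : Real.exp (-γ * s) ≤ 2 * ‖w s‖ := by linarith
      nlinarith
    have := hr s hs
    linarith
  -- derivative computation
  have hws := hw s hs
  have hinner : HasDerivAt (fun t => ⟪w t, w t⟫) (⟪w s, w' s⟫ + ⟪w' s, w s⟫) s :=
    hws.inner ℝ hws
  have hderiv : deriv (fun t => ‖w t‖ ^ 2) s = 2 * ⟪w s, w' s⟫ := by
    have heq : (fun t => ‖w t‖ ^ 2) = fun t => ⟪w t, w t⟫ := by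
      funext t; rw [real_inner_self_eq_norm_sq]
    rw [heq, hinner.deriv, real_inner_comm (w' s) (w s)]; ring
  -- inner product with w'
  have hkey : ⟪w s, w' s⟫ = (∑ i, lam i * (w s i)^2) + ⟪w s, r s⟫ := by
    simp only [PiLp.inner_apply, RCLike.inner_apply, starRingEnd_apply, star_trivial]
    rw [← Finset.sum_add_distrib]
    apply Finset.sum_congr rfl
    intro i _
    rw [hw' s hs i]; ring
  have hlam2 : lammin * ‖w s‖ ^ 2 ≤ ∑ i, lam i * (w s i)^2 := by
    have : ‖w s‖ ^ 2 = ∑ i, (w s i)^2 := by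
      rw [EuclideanSpace.norm_eq, Real.sq_sqrt (by positivity)]
      exact Finset.sum_congr rfl fun i _ => by rw [Real.norm_eq_abs, sq_abs]
    rw [this, Finset.mul_sum]
    apply Finset.sum_le_sum
    intro i _
    nlinarith [sq_nonneg (w s i), hlam i]
  have hinner2 : -(‖w s‖ * ‖r s‖) ≤ ⟪w s, r s⟫ := by
    have := abs_real_inner_le_norm (w s) (r s)
    rw [abs_le] at this; linarith [this.1]
  rw [hderiv, hkey]
  nlinarith [mul_le_mul_of_nonneg_left hrb hwpos.le, mul_pos hlammin (pow_pos hwpos 2),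
    sq_nonneg (‖w s‖), mul_self_nonneg (‖w s‖)]
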